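/- Let a ∈ ℝ, Δ > 0, let c_1, …, c_K ∈ ℝ^n be pairwise distinct constant vectors, and for a chattering measure α define g^α : [a, a+Δ) → ℝ^n by g^α(t) = c_k for t ∈ [a + Δσ^α_{k−1}, a + Δσ^α_k), where σ^α_0 = 0 and σ^α_k = α_1 + ⋯ + α_k. Then for any two chattering measures α and β, the Lebesgue measure of the set {t ∈ [a, a+Δ) : g^α(t) ≠ g^β(t)} is at most Δ · Σ_{k=1}^{K−1} |σ^α_k − σ^β_k|; in particular this measure tends to 0 as β → α. -/

import Mathlib

open MeasureTheory Set

private lemma chattering_exists_idx (K : ℕ) (hK : 0 < K) (s : ℕ → ℝ)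
    (t : ℝ) (h1 : s 0 ≤ t) (h2 : t < s K) :
    ∃ k < K, s k ≤ t ∧ t < s (k + 1) := by
  classical
  set F := (Finset.range K).filter (fun k => s k ≤ t) with hF
  have hne : F.Nonempty := ⟨0, by simp [hF, hK, h1]⟩
  obtain ⟨hk1, hk2⟩ := Finset.mem_filter.mp (F.max'_mem hne)
  rw [Finset.mem_range] at hk1
  refine ⟨F.max' hne, hk1, hk2, ?_⟩
  rcases eq_or_lt_of_le (Nat.succ_le_of_lt hk1) with h | h
  · have h' : F.max' hne + 1 = K := h
    rw [h']; exact h2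
  · by_contra hcon
    push_neg at hcon
    have hin : F.max' hne + 1 ∈ F :=
      Finset.mem_filter.mpr ⟨Finset.mem_range.mpr h, hcon⟩
    have := F.le_max' _ hin
    omega

private lemma chattering_partial_mono (K : ℕ) (α : ℕ → ℝ) (hα0 : ∀ k < K, 0 ≤ α k) :
    ∀ i j, i ≤ j → j ≤ K →
      ∑ l ∈ Finset.range i, α l ≤ ∑ l ∈ Finset.range j, α l := by
  intro i j hij hjK
  apply Finset.sum_le_sum_of_subset_of_nonneg (Finset.range_subset_range.mpr hij)
  intro l hl _
  exact hα0 l (lt_of_lt_of_le (Finset.mem_range.mp hl) hjK)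

/-- Continuity part of the Chattering Lemma: if `gα`, `gβ` are the explicit
chattering combinations on `[a, a+Δ)` of pairwise distinct constant levels
`c 0, …, c (K-1)` with chattering measures `α` and `β` (constant value `c k`
on `[a + Δ·σ k, a + Δ·σ (k+1))`, `σ k` the partial sums of the measure), then
the set where they differ has Lebesgue measure at most
`Δ * ∑_{k=1}^{K-1} |σ^α k - σ^β k|`; in particular it tends to `0` as
`β → α`. -/
theorem chattering_continuity
    (n K : ℕ) (hK : 0 < K) (a Δ : ℝ) (hΔ : 0 < Δ)
    (c : ℕ → EuclideanSpace ℝ (Fin n))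
    (hc : ∀ i < K, ∀ j < K, i ≠ j → c i ≠ c j)
    (α : ℕ → ℝ) (hα0 : ∀ k < K, 0 ≤ α k)
    (hα1 : ∑ k ∈ Finset.range K, α k = 1)
    (gα : ℝ → EuclideanSpace ℝ (Fin n))
    (hgα : ∀ k < K, ∀ t ∈ Ico (a + Δ * ∑ j ∈ Finset.range k, α j)
          (a + Δ * ∑ j ∈ Finset.range (k + 1), α j), gα t = c k) :
    (∀ (β : ℕ → ℝ) (gβ : ℝ → EuclideanSpace ℝ (Fin n)),
        (∀ k < K, 0 ≤ β k) → (∑ k ∈ Finset.range K, β k = 1) →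
        (∀ k < K, ∀ t ∈ Ico (a + Δ * ∑ j ∈ Finset.range k, β j)
            (a + Δ * ∑ j ∈ Finset.range (k + 1), β j), gβ t = c k) →
        volume {t ∈ Ico a (a + Δ) | gα t ≠ gβ t} ≤
          ENNReal.ofReal (Δ * ∑ k ∈ Finset.Ico 1 K,
            |(∑ j ∈ Finset.range k, α j) - (∑ j ∈ Finset.range k, β j)|)) ∧
    (∀ ε > (0 : ℝ), ∃ δ > (0 : ℝ),
      ∀ (β : ℕ → ℝ) (gβ : ℝ → EuclideanSpace ℝ (Fin n)),
        (∀ k < K, 0 ≤ β k) → (∑ k ∈ Finset.range K, β k = 1) →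
        (∀ k < K, ∀ t ∈ Ico (a + Δ * ∑ j ∈ Finset.range k, β j)
            (a + Δ * ∑ j ∈ Finset.range (k + 1), β j), gβ t = c k) →
        (∀ k < K, |β k - α k| < δ) →
        volume {t ∈ Ico a (a + Δ) | gα t ≠ gβ t} < ENNReal.ofReal ε) := by
  have key : ∀ (β : ℕ → ℝ) (gβ : ℝ → EuclideanSpace ℝ (Fin n)),
      (∀ k < K, 0 ≤ β k) → (∑ k ∈ Finset.range K, β k = 1) →
      (∀ k < K, ∀ t ∈ Ico (a + Δ * ∑ j ∈ Finset.range k, β j)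
          (a + Δ * ∑ j ∈ Finset.range (k + 1), β j), gβ t = c k) →
      volume {t ∈ Ico a (a + Δ) | gα t ≠ gβ t} ≤
        ENNReal.ofReal (Δ * ∑ k ∈ Finset.Ico 1 K,
          |(∑ j ∈ Finset.range k, α j) - (∑ j ∈ Finset.range k, β j)|) := by
    intro β gβ hβ0 hβ1 hgβ
    set Fα : ℕ → ℝ := fun k => a + Δ * ∑ j ∈ Finset.range k, α j with hFα
    set Fβ : ℕ → ℝ := fun k => a + Δ * ∑ j ∈ Finset.range k, β j with hFβ
    have hmα : ∀ i j, i ≤ j → j ≤ K → Fα i ≤ Fα j := by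
      intro i j hij hjK
      exact add_le_add_right (mul_le_mul_of_nonneg_left
        (chattering_partial_mono K α hα0 i j hij hjK) hΔ.le) a
    have hmβ : ∀ i j, i ≤ j → j ≤ K → Fβ i ≤ Fβ j := by
      intro i j hij hjK
      exact add_le_add_right (mul_le_mul_of_nonneg_left
        (chattering_partial_mono K β hβ0 i j hij hjK) hΔ.le) a
    have h0α : Fα 0 = a := by simp [hFα]
    have hKα : Fα K = a + Δ := by simp [hFα, hα1]
    have h0β : Fβ 0 = a := by simp [hFβ]
    have hKβ : Fβ K = a + Δ := by simp [hFβ, hβ1]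
    have hsub : {t ∈ Ico a (a + Δ) | gα t ≠ gβ t} ⊆
        ⋃ m ∈ Finset.Ico 1 K, Ico (min (Fα m) (Fβ m)) (max (Fα m) (Fβ m)) := by
      rintro t ⟨ht, hnet⟩
      obtain ⟨k, hkK, hk1, hk2⟩ :=
        chattering_exists_idx K hK Fα t (h0α ▸ ht.1) (hKα ▸ ht.2)
      obtain ⟨l, hlK, hl1, hl2⟩ :=
        chattering_exists_idx K hK Fβ t (h0β ▸ ht.1) (hKβ ▸ ht.2)
      have hgat : gα t = c k := hgα k hkK t ⟨hk1, hk2⟩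
      have hgbt : gβ t = c l := hgβ l hlK t ⟨hl1, hl2⟩
      have hkl : k ≠ l := by
        rintro rfl; exact hnet (hgat.trans hgbt.symm)
      simp only [Set.mem_iUnion, Finset.mem_Ico, Set.mem_Ico, exists_prop]
      rcases hkl.lt_or_gt with h | h
      · refine ⟨l, ⟨by omega, hlK⟩, le_trans (min_le_right _ _) hl1, ?_⟩
        exact lt_of_lt_of_le (lt_of_lt_of_le hk2 (hmα (k+1) l h hlK.le))
          (le_max_left _ _)
      · refine ⟨k, ⟨by omega, hkK⟩, le_trans (min_le_left _ _) hk1, ?_⟩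
        exact lt_of_lt_of_le (lt_of_lt_of_le hl2 (hmβ (l+1) k h hkK.le))
          (le_max_right _ _)
    calc volume {t ∈ Ico a (a + Δ) | gα t ≠ gβ t}
        ≤ volume (⋃ m ∈ Finset.Ico 1 K,
            Ico (min (Fα m) (Fβ m)) (max (Fα m) (Fβ m))) := measure_mono hsub
      _ ≤ ∑ m ∈ Finset.Ico 1 K,
            volume (Ico (min (Fα m) (Fβ m)) (max (Fα m) (Fβ m))) :=
          measure_biUnion_finset_le _ _
      _ = ∑ m ∈ Finset.Ico 1 K, ENNReal.ofReal
            (Δ * |(∑ j ∈ Finset.range m, α j) - (∑ j ∈ Finset.range m, β j)|) := by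
          refine Finset.sum_congr rfl fun m _ => ?_
          rw [Real.volume_Ico]
          congr 1
          rw [max_sub_min_eq_abs]
          simp only [hFα, hFβ]
          rw [add_sub_add_left_eq_sub, ← mul_sub, abs_mul, abs_of_pos hΔ, abs_sub_comm]
      _ = ENNReal.ofReal (Δ * ∑ k ∈ Finset.Ico 1 K,
            |(∑ j ∈ Finset.range k, α j) - (∑ j ∈ Finset.range k, β j)|) := by
          rw [Finset.mul_sum, ENNReal.ofReal_sum_of_nonneg]
          intro m _; positivity
  refine ⟨key, ?_⟩
  intro ε hε
  have hKR : (0:ℝ) < K := by exact_mod_cast hK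
  set δ : ℝ := ε / (2 * Δ * K * K) with hδdef
  have hδ0 : 0 < δ := by positivity
  refine ⟨δ, hδ0, ?_⟩
  intro β gβ hβ0 hβ1 hgβ hclose
  have hbound : ∑ m ∈ Finset.Ico 1 K,
      |(∑ j ∈ Finset.range m, α j) - (∑ j ∈ Finset.range m, β j)| ≤ (K:ℝ) * ((K:ℝ) * δ) := by
    calc ∑ m ∈ Finset.Ico 1 K,
          |(∑ j ∈ Finset.range m, α j) - (∑ j ∈ Finset.range m, β j)|
        ≤ ∑ _m ∈ Finset.Ico 1 K, (K:ℝ) * δ := by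
          refine Finset.sum_le_sum fun m hm => ?_
          rw [Finset.mem_Ico] at hm
          rw [← Finset.sum_sub_distrib]
          refine le_trans (Finset.abs_sum_le_sum_abs _ _) ?_
          calc ∑ j ∈ Finset.range m, |α j - β j|
              ≤ ∑ _j ∈ Finset.range m, δ := by
                refine Finset.sum_le_sum fun j hj => ?_
                rw [Finset.mem_range] at hj
                rw [abs_sub_comm]
                exact (hclose j (by omega)).le
            _ = (m:ℝ) * δ := by simp
            _ ≤ (K:ℝ) * δ := by
                have : (m:ℝ) ≤ K := by exact_mod_cast hm.2.le
                nlinarith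
      _ = ((Finset.Ico 1 K).card : ℝ) * ((K:ℝ) * δ) := by
          rw [Finset.sum_const, nsmul_eq_mul]
      _ ≤ (K:ℝ) * ((K:ℝ) * δ) := by
          have hcard : ((Finset.Ico 1 K).card : ℝ) ≤ K := by
            rw [Nat.card_Ico]; exact_mod_cast Nat.sub_le K 1
          exact mul_le_mul_of_nonneg_right hcard (by positivity)
  calc volume {t ∈ Ico a (a + Δ) | gα t ≠ gβ t}
      ≤ ENNReal.ofReal (Δ * ∑ k ∈ Finset.Ico 1 K,
          |(∑ j ∈ Finset.range k, α j) - (∑ j ∈ Finset.range k, β j)|) :=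
        key β gβ hβ0 hβ1 hgβ
    _ < ENNReal.ofReal ε := by
        rw [ENNReal.ofReal_lt_ofReal_iff hε]
        have h1 : Δ * ∑ k ∈ Finset.Ico 1 K,
            |(∑ j ∈ Finset.range k, α j) - (∑ j ∈ Finset.range k, β j)|
            ≤ Δ * ((K:ℝ) * ((K:ℝ) * δ)) :=
          mul_le_mul_of_nonneg_left hbound hΔ.le
        have h2 : Δ * ((K:ℝ) * ((K:ℝ) * δ)) = ε / 2 := by
          rw [hδdef]; field_simp
        linarith [half_lt_self hε]
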